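/- Let H^j_k ∈ ℂ for j ≥ 3 and k ∈ {−2, 0, 1, 2, 3, …}, and let p_j = z^j + H^j_{−2} z² + H^j_0 + ∑_{k≥1} H^j_k z^{−k} (j ≥ 3) be the Σ₃ family. Then the family {p_j}_{j≥3} is multiplicatively closed and z² p_j lies in its ℂ-linear span for every j ≥ 3 if and only if: H^j_k = 0 for all j ≥ 3 and k ≥ 1 (so every p_j is the polynomial z^j + H^j_{−2} z² + H^j_0); the recursions H^j_{−2} + H^{j−2}_{−2} H⁴_{−2} − H^{j−2}_0 = 0 and H^j_0 + H^{j−2}_{−2} H⁴_0 = 0 hold for all j ≥ 5; and the two associativity constraints H⁴₀ + 2H³₀H³₋₂ − (H³₋₂)² H⁴₋₂ − (H⁴₋₂)² = 0 and (H³₀)² − (H³₋₂)² H⁴₀ − H⁴₋₂ H⁴₀ = 0 hold. -/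

import Mathlib

noncomputable section

/-- `z^j` viewed as a formal Laurent series in `t = z⁻¹` (so `z^j = t^(-j)`). -/
def zp (j : ℤ) : LaurentSeries ℂ := HahnSeries.single (-j) 1

/-- The `Σ₃` family `p_j = z^j + H^j_{-2} z² + H^j_0 + ∑_{k ≥ 1} H^j_k z^(-k)`, `j ≥ 3`. -/
def sigma3 (H : ℕ → ℤ → ℂ) (j : ℕ) : LaurentSeries ℂ :=
  zp j + H j (-2) • zp 2
    + HahnSeries.ofPowerSeries ℤ ℂ (PowerSeries.mk fun k => H j (k:ℤ))

/-- The `Σ₃` family `{p_j}_{j ≥ 3}` as a set of Laurent series. -/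
def sigma3Set (H : ℕ → ℤ → ℂ) : Set (LaurentSeries ℂ) := sigma3 H '' {j | 3 ≤ j}

lemma zp_coeff (j n : ℤ) : (zp j).coeff n = if n = -j then 1 else 0 :=
  by rw [zp, HahnSeries.coeff_single]; congr 1

lemma zp_mul (a b : ℤ) : zp a * zp b = zp (a + b) := by
  simp only [zp, HahnSeries.single_mul_single, one_mul]
  congr 1
  ring

lemma zp_mul_coeff (m : ℤ) (x : LaurentSeries ℂ) (n : ℤ) :
    (zp m * x).coeff n = x.coeff (n + m) := by
  have h := HahnSeries.coeff_single_mul_add (r := (1:ℂ)) (x := x) (a := n + m) (b := -m)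
  simp only [one_mul] at h
  rw [zp, show n = n + m + -m by ring, h]
  congr 1
  ring

lemma ofPS_coeff (f : PowerSeries ℂ) (n : ℤ) :
    (HahnSeries.ofPowerSeries ℤ ℂ f).coeff n =
      if n < 0 then 0 else PowerSeries.coeff n.toNat f := by
  rcases lt_or_ge n 0 with h | h
  · rw [if_pos h, HahnSeries.ofPowerSeries_apply, HahnSeries.embDomain_notin_range]
    rintro ⟨k, hk⟩
    simp only [Nat.castOrderEmbedding_apply] at hk
    omega
  · rw [if_neg (not_lt.2 h)]
    lift n to ℕ using h
    rw [Int.toNat_natCast, HahnSeries.ofPowerSeries_apply_coeff]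

lemma sigma3_coeff (H : ℕ → ℤ → ℂ) (j : ℕ) (hj : 3 ≤ j) (n : ℤ) :
    (sigma3 H j).coeff n =
      if n = -(j:ℤ) then 1 else if n = -2 then H j (-2) else if n < 0 then 0 else H j n := by
  have hn : ¬ ((n:ℤ) = -(j:ℤ)) ∨ True := Or.inr trivial
  rw [sigma3, HahnSeries.coeff_add, HahnSeries.coeff_add, HahnSeries.coeff_smul,
    zp_coeff, zp_coeff, ofPS_coeff]
  rcases lt_or_ge n 0 with h | h
  · split_ifs with h1 h2 <;> simp_all <;> omega
  · have h1 : ¬ (n = -(j:ℤ)) := by omega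
    have h2 : ¬ (n = -2) := by omega
    have h3 : ¬ (n < 0) := by omega
    simp only [h1, h2, h3, if_false, PowerSeries.coeff_mk, smul_eq_mul, mul_zero]
    rw [Int.toNat_of_nonneg h]
    ring

def lcoeff (n : ℤ) : LaurentSeries ℂ →ₗ[ℂ] ℂ where
  toFun x := x.coeff n
  map_add' _ _ := HahnSeries.coeff_add
  map_smul' _ _ := HahnSeries.coeff_smul

lemma span_coeff_repr {H : ℕ → ℤ → ℂ} {s : LaurentSeries ℂ}
    (hs : s ∈ Submodule.span ℂ (sigma3Set H)) (T : Finset ℕ) (hT3 : ∀ k ∈ T, 3 ≤ k)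
    (hT : ∀ k : ℕ, 3 ≤ k → s.coeff (-(k:ℤ)) ≠ 0 → k ∈ T) :
    s = ∑ k ∈ T, s.coeff (-(k:ℤ)) • sigma3 H k := by
  rw [sigma3Set] at hs
  obtain ⟨l, hl, rfl⟩ := (Finsupp.mem_span_image_iff_linearCombination ℂ).1 hs
  rw [Finsupp.mem_supported] at hl
  set s := Finsupp.linearCombination ℂ (sigma3 H) l with hsdef
  have hco : ∀ k : ℕ, 3 ≤ k → s.coeff (-(k:ℤ)) = l k := by
    intro k hk
    have : s.coeff (-(k:ℤ)) = lcoeff (-(k:ℤ)) s := rfl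
    rw [this, hsdef, Finsupp.linearCombination_apply, map_finsuppSum]
    have : ∀ i ∈ l.support, (lcoeff (-(k:ℤ))) (l i • sigma3 H i)
        = if k = i then l i else 0 := by
      intro i hi
      have hi3 : 3 ≤ i := hl hi
      show l i • (sigma3 H i).coeff (-(k:ℤ)) = _
      rw [sigma3_coeff H i hi3]
      have h2 : ¬ (-(k:ℤ) = -2) := by omega
      by_cases h : k = i
      · subst h; simp
      · have : ¬ (-(k:ℤ) = -(i:ℤ)) := by omega
        simp [this, h2, h, show -(k:ℤ) < 0 by omega, show k ≠ 0 by omega]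
    rw [Finsupp.sum, Finset.sum_congr rfl this]
    by_cases hk' : k ∈ l.support
    · rw [Finset.sum_eq_single_of_mem k hk' (by intro b _ hb; simp [Ne.symm hb]), if_pos rfl]
    · rw [Finset.sum_eq_zero, eq_comm]
      · simpa using hk'
      · intro b hb
        have : k ≠ b := by rintro rfl; exact hk' hb
        simp [this]
  have hsupp : l.support ⊆ T := by
    intro i hi
    have hi3 : 3 ≤ i := hl hi
    exact hT i hi3 (by rw [hco i hi3]; simpa using hi)
  calc s = ∑ i ∈ l.support, l i • sigma3 H i := by
          rw [hsdef, Finsupp.linearCombination_apply, Finsupp.sum]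
    _ = ∑ i ∈ T, l i • sigma3 H i := by
          refine Finset.sum_subset hsupp ?_
          intro x _ hx
          rw [Finsupp.notMem_support_iff.1 hx]; exact zero_smul ℂ (sigma3 H x)
    _ = ∑ k ∈ T, s.coeff (-(k:ℤ)) • sigma3 H k := by
          refine Finset.sum_congr rfl fun k hk => ?_
          rw [hco k (hT3 k hk)]

lemma tails_vanish (H : ℕ → ℤ → ℂ)
    (hAS : ∀ i j : ℕ, 3 ≤ i → 3 ≤ j → H j ((i:ℤ)-1) + H i ((j:ℤ)-1) = 0)
    (hR3 : ∀ j m : ℕ, 3 ≤ j → 1 ≤ m → H j ((m:ℤ)+2) = H (j+2) (m:ℤ) + H j (-2) * H 4 (m:ℤ))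
    (hR0 : ∀ j : ℕ, 3 ≤ j → H j 1 = 0) :
    ∀ j k : ℕ, 3 ≤ j → 1 ≤ k → H j (k:ℤ) = 0 := by
  have hodd : ∀ m : ℕ, ∀ j, 3 ≤ j → H j ((2*m+1 : ℕ) : ℤ) = 0 := by
    intro m
    induction m with
    | zero => intro j hj; simpa using hR0 j hj
    | succ m ih =>
        intro j hj
        have h := hR3 j (2*m+1) hj (by omega)
        have e1 : ((2*(m+1)+1 : ℕ) : ℤ) = ((2*m+1 : ℕ) : ℤ) + 2 := by push_cast; ring
        rw [e1, h, ih (j+2) (by omega), ih 4 (by norm_num), mul_zero, add_zero]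
  have h4 : ∀ k : ℕ, 1 ≤ k → H 4 (k:ℤ) = 0 := by
    intro k hk
    rcases Nat.even_or_odd k with ⟨m, hm⟩ | ⟨m, hm⟩
    · -- k = 2m, m ≥ 1
      have hm1 : 1 ≤ m := by omega
      have h := hAS (2*m+1) 4 (by omega) (by norm_num)
      have e1 : ((2*m+1 : ℕ) : ℤ) - 1 = (k : ℤ) := by omega
      have e2 : ((4:ℕ):ℤ) - 1 = ((2*1+1 : ℕ) : ℤ) := by norm_num
      rw [e1, e2, hodd 1 (2*m+1) (by omega), add_zero] at h
      exact h
    · have e : (k : ℕ) = 2*m+1 := by omega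
      rw [e]; exact hodd m 4 (by norm_num)
  have hR3' : ∀ j m : ℕ, 3 ≤ j → 1 ≤ m → H j ((m:ℤ)+2) = H (j+2) (m:ℤ) := by
    intro j m hj hm
    rw [hR3 j m hj hm, h4 m hm, mul_zero, add_zero]
  have heven : ∀ m : ℕ, 1 ≤ m → ∀ j, 3 ≤ j → H j ((2*m : ℕ) : ℤ) = H (j+2*m-2) 2 := by
    intro m
    induction m with
    | zero => omega
    | succ m ih =>
        intro _ j hj
        rcases Nat.eq_or_lt_of_le (show 1 ≤ m + 1 from by omega) with h1 | h1
        · have : m = 0 := by omega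
          subst this
          norm_num
        · have hm1 : 1 ≤ m := by omega
          have h := hR3' j (2*m) hj (by omega)
          have e1 : ((2*(m+1) : ℕ) : ℤ) = ((2*m : ℕ) : ℤ) + 2 := by push_cast; ring
          rw [e1, h, ih hm1 (j+2) (by omega)]
          congr 1
          omega
  have h2 : ∀ j, 3 ≤ j → H j 2 = 0 := by
    intro j hj
    have h := hAS 3 j (by norm_num) hj
    have e1 : ((3:ℕ):ℤ) - 1 = 2 := by norm_num
    rw [e1] at h
    rcases Nat.even_or_odd j with ⟨m, hm⟩ | ⟨m, hm⟩
    · -- j = 2m, j - 1 = 2(m-1)+1 odd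
      have e2 : (j:ℤ) - 1 = ((2*(m-1)+1 : ℕ) : ℤ) := by omega
      rw [e2, hodd (m-1) 3 (by norm_num), add_zero] at h
      exact h
    · -- j = 2m+1, j - 1 = 2m even, m ≥ 1
      have hm1 : 1 ≤ m := by omega
      have e2 : (j:ℤ) - 1 = ((2*m : ℕ) : ℤ) := by omega
      rw [e2, heven m hm1 3 (by norm_num)] at h
      have e3 : 3 + 2*m - 2 = j := by omega
      rw [e3] at h
      linear_combination h / 2
  intro j k hj hk
  rcases Nat.even_or_odd k with ⟨m, hm⟩ | ⟨m, hm⟩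
  · have hm1 : 1 ≤ m := by omega
    have e : (k : ℕ) = 2*m := by omega
    rw [e, heven m hm1 j hj]
    exact h2 (j + 2*m - 2) (by omega)
  · have e : (k : ℕ) = 2*m+1 := by omega
    rw [e]; exact hodd m j hj

def Sf (H : ℕ → ℤ → ℂ) (j : ℕ) : LaurentSeries ℂ :=
  HahnSeries.ofPowerSeries ℤ ℂ (PowerSeries.mk fun k => H j (k:ℤ))

lemma sigma3_def (H : ℕ → ℤ → ℂ) (j : ℕ) :
    sigma3 H j = zp j + H j (-2) • zp 2 + Sf H j := rfl

lemma Sf_coeff (H : ℕ → ℤ → ℂ) (j : ℕ) (n : ℤ) (hn : 0 ≤ n) :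
    (Sf H j).coeff n = H j n := by
  rw [Sf, ofPS_coeff, if_neg (not_lt.2 hn), PowerSeries.coeff_mk]
  congr 1
  omega

lemma Sf_mul_coeff_neg (H : ℕ → ℤ → ℂ) (i j : ℕ) (n : ℤ) (hn : n < 0) :
    (Sf H i * Sf H j).coeff n = 0 := by
  rw [Sf, Sf, ← map_mul, ofPS_coeff, if_pos hn]

lemma sigma3_coeff_neg1 (H : ℕ → ℤ → ℂ) {j : ℕ} (hj : 3 ≤ j) :
    (sigma3 H j).coeff (-1) = 0 := by
  rw [sigma3_coeff H j hj, if_neg (by omega), if_neg (by norm_num), if_pos (by norm_num)]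

lemma sigma3_coeff_neg2 (H : ℕ → ℤ → ℂ) {j : ℕ} (hj : 3 ≤ j) :
    (sigma3 H j).coeff (-2) = H j (-2) := by
  rw [sigma3_coeff H j hj, if_neg (by omega), if_pos rfl]

lemma sigma3_coeff_nonneg (H : ℕ → ℤ → ℂ) {j : ℕ} (hj : 3 ≤ j) (n : ℤ) (hn : 0 ≤ n) :
    (sigma3 H j).coeff n = H j n := by
  rw [sigma3_coeff H j hj, if_neg (by omega), if_neg (by omega), if_neg (by omega)]

lemma sigma3_mem (H : ℕ → ℤ → ℂ) {j : ℕ} (hj : 3 ≤ j) : sigma3 H j ∈ sigma3Set H :=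
  ⟨j, hj, rfl⟩

lemma zp2_mul_eq (H : ℕ → ℤ → ℂ)
    (hz2 : ∀ x ∈ sigma3Set H, zp 2 * x ∈ Submodule.span ℂ (sigma3Set H))
    (j : ℕ) (hj : 3 ≤ j) :
    zp 2 * sigma3 H j = sigma3 H (j+2) + H j (-2) • sigma3 H 4 := by
  have hmem : zp 2 * sigma3 H j ∈ Submodule.span ℂ (sigma3Set H) :=
    hz2 _ (sigma3_mem H hj)
  have hc : ∀ n : ℤ, (zp 2 * sigma3 H j).coeff n = (sigma3 H j).coeff (n+2) :=
    fun n => zp_mul_coeff 2 _ n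
  have hT3 : ∀ k ∈ ({j+2, 4} : Finset ℕ), 3 ≤ k := by
    intro k hk
    simp only [Finset.mem_insert, Finset.mem_singleton] at hk
    omega
  have hT : ∀ k : ℕ, 3 ≤ k → (zp 2 * sigma3 H j).coeff (-(k:ℤ)) ≠ 0 →
      k ∈ ({j+2, 4} : Finset ℕ) := by
    intro k hk3 hne
    rw [hc, sigma3_coeff H j hj] at hne
    simp only [Finset.mem_insert, Finset.mem_singleton]
    by_contra hcon
    push_neg at hcon
    obtain ⟨h1, h2⟩ := hcon
    rw [if_neg (by omega), if_neg (by omega), if_pos (by omega)] at hne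
    exact hne rfl
  have hrep := span_coeff_repr hmem ({j+2, 4} : Finset ℕ) hT3 hT
  rw [Finset.sum_pair (by omega : j+2 ≠ 4)] at hrep
  rw [hc, hc] at hrep
  have c1 : (sigma3 H j).coeff (-((j+2:ℕ):ℤ) + 2) = 1 := by
    rw [sigma3_coeff H j hj, if_pos (by push_cast; ring)]
  have c2 : (sigma3 H j).coeff (-((4:ℕ):ℤ) + 2) = H j (-2) := by
    rw [sigma3_coeff H j hj, if_neg (by omega), if_pos (by norm_num)]
  rw [c1, c2, one_smul] at hrep
  exact hrep

lemma master_coeff (H : ℕ → ℤ → ℂ)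
    (hz2 : ∀ x ∈ sigma3Set H, zp 2 * x ∈ Submodule.span ℂ (sigma3Set H))
    (j : ℕ) (hj : 3 ≤ j) (n : ℤ) :
    (sigma3 H j).coeff (n+2) =
      (sigma3 H (j+2)).coeff n + H j (-2) * (sigma3 H 4).coeff n := by
  have h := congrArg (fun x : LaurentSeries ℂ => x.coeff n) (zp2_mul_eq H hz2 j hj)
  simpa [zp_mul_coeff, HahnSeries.coeff_add, HahnSeries.coeff_smul] using h

lemma span_coeff_neg1 (H : ℕ → ℤ → ℂ) {s : LaurentSeries ℂ}
    (hs : s ∈ Submodule.span ℂ (sigma3Set H)) : s.coeff (-1) = 0 := by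
  have hle : Submodule.span ℂ (sigma3Set H) ≤ LinearMap.ker (lcoeff (-1)) := by
    rw [Submodule.span_le]
    rintro x ⟨k, hk, rfl⟩
    exact sigma3_coeff_neg1 H hk
  exact hle hs

lemma csmul_mul (a : ℂ) (x y : LaurentSeries ℂ) : (a • x) * y = a • (x * y) := by
  rw [← HahnSeries.C_mul_eq_smul, ← HahnSeries.C_mul_eq_smul, mul_assoc]

lemma cmul_smul (a : ℂ) (x y : LaurentSeries ℂ) : x * (a • y) = a • (x * y) := by
  rw [← HahnSeries.C_mul_eq_smul, ← HahnSeries.C_mul_eq_smul, mul_left_comm]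

lemma sigma3_mul_expand (H : ℕ → ℤ → ℂ) (i j : ℕ) :
    sigma3 H i * sigma3 H j
    = zp i * zp j + H j (-2) • (zp i * zp 2) + zp i * Sf H j
      + H i (-2) • (zp 2 * zp j) + (H j (-2) * H i (-2)) • (zp 2 * zp 2)
      + H i (-2) • (zp 2 * Sf H j)
      + zp j * Sf H i + H j (-2) • (zp 2 * Sf H i) + Sf H i * Sf H j := by
  rw [sigma3_def, sigma3_def]
  simp only [mul_add, add_mul, csmul_mul, cmul_smul, smul_smul]
  have hc : Sf H i * zp j = zp j * Sf H i := mul_comm _ _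
  have hc2 : Sf H i * zp 2 = zp 2 * Sf H i := mul_comm _ _
  rw [hc, hc2]
  abel

lemma prod_coeff_neg1 (H : ℕ → ℤ → ℂ) (i j : ℕ) (hi : 3 ≤ i) (hj : 3 ≤ j) :
    (sigma3 H i * sigma3 H j).coeff (-1) =
      H j ((i:ℤ)-1) + H i ((j:ℤ)-1) + H i (-2) * H j 1 + H j (-2) * H i 1 := by
  have t1 : (zp (i:ℤ) * zp (j:ℤ)).coeff (-1) = 0 := by
    rw [zp_mul, zp_coeff, if_neg (by omega)]
  have t2 : (zp (i:ℤ) * zp 2).coeff (-1) = 0 := by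
    rw [zp_mul, zp_coeff, if_neg (by omega)]
  have t3 : (zp 2 * zp (j:ℤ)).coeff (-1) = 0 := by
    rw [zp_mul, zp_coeff, if_neg (by omega)]
  have t4 : (zp 2 * zp 2).coeff (-1) = 0 := by
    rw [zp_mul, zp_coeff, if_neg (by omega)]
  have t5 : (zp (i:ℤ) * Sf H j).coeff (-1) = H j ((i:ℤ)-1) := by
    rw [zp_mul_coeff, show (-1 + (i:ℤ)) = (i:ℤ)-1 by ring, Sf_coeff H j _ (by omega)]
  have t6 : (zp 2 * Sf H j).coeff (-1) = H j 1 := by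
    rw [zp_mul_coeff, show (-1 + (2:ℤ)) = ((1:ℕ):ℤ) by norm_num, Sf_coeff H j _ (by norm_num)]
    norm_num
  have t7 : (zp (j:ℤ) * Sf H i).coeff (-1) = H i ((j:ℤ)-1) := by
    rw [zp_mul_coeff, show (-1 + (j:ℤ)) = (j:ℤ)-1 by ring, Sf_coeff H i _ (by omega)]
  have t8 : (zp 2 * Sf H i).coeff (-1) = H i 1 := by
    rw [zp_mul_coeff, show (-1 + (2:ℤ)) = ((1:ℕ):ℤ) by norm_num, Sf_coeff H i _ (by norm_num)]
    norm_num
  have t9 : (Sf H i * Sf H j).coeff (-1) = 0 := Sf_mul_coeff_neg H i j (-1) (by norm_num)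
  rw [sigma3_mul_expand]
  simp only [HahnSeries.coeff_add, HahnSeries.coeff_smul, smul_eq_mul,
    t1, t2, t3, t4, t5, t6, t7, t8, t9]
  ring

lemma poly_mul_expand (x y : ℤ) (a b c d : ℂ) :
    (zp x + a • zp 2 + b • zp 0) * (zp y + c • zp 2 + d • zp 0)
    = zp (x+y) + c • zp (x+2) + d • zp x + a • zp (y+2) + (a*c) • zp 4
      + (a*d + b*c) • zp 2 + b • zp y + (b*d) • zp 0 := by
  simp only [mul_add, add_mul, csmul_mul, cmul_smul, smul_smul, zp_mul, add_smul]
  ring_nf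
  module

lemma sigma3_eq_poly (H : ℕ → ℤ → ℂ) (j : ℕ) (hj : 3 ≤ j)
    (ht : ∀ k : ℕ, 1 ≤ k → H j (k:ℤ) = 0) :
    sigma3 H j = zp j + H j (-2) • zp 2 + H j 0 • zp 0 := by
  rw [sigma3_def]
  congr 1
  have h1 : (PowerSeries.mk fun k => H j (k:ℤ)) = PowerSeries.C (H j 0) := by
    ext k
    rw [PowerSeries.coeff_mk, PowerSeries.coeff_C]
    rcases Nat.eq_zero_or_pos k with h | h
    · subst h; norm_num
    · rw [if_neg (by omega), ht k h]
  rw [Sf, h1, HahnSeries.ofPowerSeries_C]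
  ext n
  simp only [HahnSeries.C_apply, HahnSeries.coeff_smul, zp, HahnSeries.coeff_single, neg_zero,
    smul_eq_mul]
  split_ifs <;> ring

lemma FG_zero (H : ℕ → ℤ → ℂ)
    (hrecA : ∀ m, 3 ≤ m → H (m+2) (-2) = H m 0 - H m (-2) * H 4 (-2))
    (hrecB : ∀ m, 3 ≤ m → H (m+2) 0 = -(H m (-2) * H 4 0))
    (hC1 : H 4 0 + 2 * H 3 0 * H 3 (-2) - (H 3 (-2))^2 * H 4 (-2) - (H 4 (-2))^2 = 0)
    (hC2 : (H 3 0)^2 - (H 3 (-2))^2 * H 4 0 - H 4 (-2) * H 4 0 = 0) :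
    ∀ i j : ℕ, 3 ≤ i → 3 ≤ j →
      (H (i+j) (-2) + H j (-2) * H (i+2) (-2) + H i (-2) * H (j+2) (-2)
         + H i (-2) * H j (-2) * H 4 (-2) = 0) ∧
      (H (i+j) 0 + H j (-2) * H (i+2) 0 + H i (-2) * H (j+2) 0
         + H i (-2) * H j (-2) * H 4 0 + H i 0 * H j 0 = 0) := by
  -- symmetry converter
  have symmP : ∀ i j : ℕ,
      ((H (i+j) (-2) + H j (-2) * H (i+2) (-2) + H i (-2) * H (j+2) (-2)
         + H i (-2) * H j (-2) * H 4 (-2) = 0) ∧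
       (H (i+j) 0 + H j (-2) * H (i+2) 0 + H i (-2) * H (j+2) 0
         + H i (-2) * H j (-2) * H 4 0 + H i 0 * H j 0 = 0)) →
      ((H (j+i) (-2) + H i (-2) * H (j+2) (-2) + H j (-2) * H (i+2) (-2)
         + H j (-2) * H i (-2) * H 4 (-2) = 0) ∧
       (H (j+i) 0 + H i (-2) * H (j+2) 0 + H j (-2) * H (i+2) 0
         + H j (-2) * H i (-2) * H 4 0 + H j 0 * H i 0 = 0)) := by
    intro i j ⟨h1, h2⟩
    rw [Nat.add_comm j i]
    exact ⟨by linear_combination h1, by linear_combination h2⟩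
  -- the step in the second argument
  have step : ∀ i jj : ℕ, 3 ≤ i → 3 ≤ jj →
      ((H (i+jj) (-2) + H jj (-2) * H (i+2) (-2) + H i (-2) * H (jj+2) (-2)
         + H i (-2) * H jj (-2) * H 4 (-2) = 0) ∧
       (H (i+jj) 0 + H jj (-2) * H (i+2) 0 + H i (-2) * H (jj+2) 0
         + H i (-2) * H jj (-2) * H 4 0 + H i 0 * H jj 0 = 0)) →
      ((H (i+(jj+2)) (-2) + H (jj+2) (-2) * H (i+2) (-2) + H i (-2) * H ((jj+2)+2) (-2)
         + H i (-2) * H (jj+2) (-2) * H 4 (-2) = 0) ∧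
       (H (i+(jj+2)) 0 + H (jj+2) (-2) * H (i+2) 0 + H i (-2) * H ((jj+2)+2) 0
         + H i (-2) * H (jj+2) (-2) * H 4 0 + H i 0 * H (jj+2) 0 = 0)) := by
    intro i jj hi hjj ⟨Fij, Gij⟩
    have E1 := hrecA (i + jj) (by omega)
    have E2 := hrecA (jj + 2) (by omega)
    have E3 := hrecA jj hjj
    have E4 := hrecA i hi
    have E5 := hrecB i hi
    have E6 := hrecB jj hjj
    have E1' := hrecB (i + jj) (by omega)
    have E2' := hrecB (jj + 2) (by omega)
    have eidx : i + (jj + 2) = (i + jj) + 2 := by omega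
    rw [E3, E4] at Fij
    rw [E5, E6] at Gij
    constructor
    · rw [eidx, E1, E2, E3, E4, E6]
      linear_combination Gij - H 4 (-2) * Fij
    · rw [eidx, E1', E2', E3, E5, E6]
      linear_combination -(H 4 0) * Fij
  -- strong induction on i + j
  suffices h : ∀ n i j : ℕ, i + j = n → 3 ≤ i → 3 ≤ j →
      (H (i+j) (-2) + H j (-2) * H (i+2) (-2) + H i (-2) * H (j+2) (-2)
         + H i (-2) * H j (-2) * H 4 (-2) = 0) ∧
      (H (i+j) 0 + H j (-2) * H (i+2) 0 + H i (-2) * H (j+2) 0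
         + H i (-2) * H j (-2) * H 4 0 + H i 0 * H j 0 = 0) by
    intro i j hi hj; exact h (i+j) i j rfl hi hj
  intro n
  induction n using Nat.strong_induction_on with
  | _ n IH =>
    intro i j hn hi hj
    rcases le_or_gt j 4 with hj4 | hj5
    · rcases le_or_gt i 4 with hi4 | hi5
      · -- base cases
        subst hn
        have EA3 := hrecA 3 (by norm_num)
        have EB3 := hrecB 3 (by norm_num)
        have EA4 := hrecA 4 (by norm_num)
        have EB4 := hrecB 4 (by norm_num)
        have EA5 := hrecA 5 (by norm_num)
        have EB5 := hrecB 5 (by norm_num)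
        have EA6 := hrecA 6 (by norm_num)
        have EB6 := hrecB 6 (by norm_num)
        norm_num at EA3 EB3 EA4 EB4 EA5 EB5 EA6 EB6
        interval_cases i <;> interval_cases j <;> norm_num
        · exact ⟨by linear_combination EA4 + 2*H 3 (-2)*EA3 + hC1,
                 by linear_combination EB4 + 2*H 3 (-2)*EB3 + hC2⟩
        · exact ⟨by linear_combination EA5 + EB3 + H 3 (-2)*EA4,
                 by linear_combination EB5 + H 4 (-2)*EB3 + H 3 (-2)*EB4 - H 4 0*EA3⟩
        · exact ⟨by linear_combination EA5 + EB3 + H 3 (-2)*EA4,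
                 by linear_combination EB5 + H 4 (-2)*EB3 + H 3 (-2)*EB4 - H 4 0*EA3⟩
        · exact ⟨by linear_combination EA6 + EB4 + H 4 (-2)*EA4,
                 by linear_combination EB6 + 2*H 4 (-2)*EB4 - H 4 0*EA4⟩
      · -- i ≥ 5 : use symmetry and step
        obtain ⟨ii, rfl⟩ : ∃ m, i = m + 2 := ⟨i - 2, by omega⟩
        have hii : 3 ≤ ii := by omega
        have base := IH (ii + j) (by omega) ii j rfl hii hj
        exact symmP _ _ (step j ii hj hii (symmP _ _ base))
    · -- j ≥ 5
      obtain ⟨jj, rfl⟩ : ∃ m, j = m + 2 := ⟨j - 2, by omega⟩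
      have hjj : 3 ≤ jj := by omega
      exact step i jj hi hjj (IH (i + jj) (by omega) i jj rfl hi hjj)

theorem sigma3_closed_iff (H : ℕ → ℤ → ℂ) :
    ((∀ x ∈ sigma3Set H, ∀ y ∈ sigma3Set H, x * y ∈ Submodule.span ℂ (sigma3Set H)) ∧
     (∀ x ∈ sigma3Set H, zp 2 * x ∈ Submodule.span ℂ (sigma3Set H)))
    ↔
    ((∀ j k : ℕ, 3 ≤ j → 1 ≤ k → H j (k:ℤ) = 0) ∧
     (∀ j : ℕ, 5 ≤ j →
        H j (-2) + H (j-2) (-2) * H 4 (-2) - H (j-2) 0 = 0 ∧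
        H j 0 + H (j-2) (-2) * H 4 0 = 0) ∧
     (H 4 0 + 2 * H 3 0 * H 3 (-2) - (H 3 (-2))^2 * H 4 (-2) - (H 4 (-2))^2 = 0) ∧
     ((H 3 0)^2 - (H 3 (-2))^2 * H 4 0 - H 4 (-2) * H 4 0 = 0)) := by
  constructor
  · rintro ⟨hmul', hz2⟩
    have hmul : ∀ i j : ℕ, 3 ≤ i → 3 ≤ j →
        sigma3 H i * sigma3 H j ∈ Submodule.span ℂ (sigma3Set H) :=
      fun i j hi hj => hmul' _ (sigma3_mem H hi) _ (sigma3_mem H hj)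
    have hR0 : ∀ j, 3 ≤ j → H j 1 = 0 := by
      intro j hj
      have h := master_coeff H hz2 j hj (-1)
      rw [show (-1:ℤ)+2 = 1 from by norm_num, sigma3_coeff_nonneg H hj 1 (by norm_num),
        sigma3_coeff_neg1 H (show 3 ≤ j+2 by omega),
        sigma3_coeff_neg1 H (show 3 ≤ 4 by norm_num)] at h
      simpa using h
    have hAS : ∀ i j : ℕ, 3 ≤ i → 3 ≤ j → H j ((i:ℤ)-1) + H i ((j:ℤ)-1) = 0 := by
      intro i j hi hj
      have h := span_coeff_neg1 H (hmul i j hi hj)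
      rw [prod_coeff_neg1 H i j hi hj, hR0 i hi, hR0 j hj] at h
      linear_combination h
    have hR3 : ∀ j m : ℕ, 3 ≤ j → 1 ≤ m →
        H j ((m:ℤ)+2) = H (j+2) (m:ℤ) + H j (-2) * H 4 (m:ℤ) := by
      intro j m hj _
      have h := master_coeff H hz2 j hj (m:ℤ)
      rw [sigma3_coeff_nonneg H hj ((m:ℤ)+2) (by omega),
        sigma3_coeff_nonneg H (show 3 ≤ j+2 by omega) (m:ℤ) (by omega),
        sigma3_coeff_nonneg H (show 3 ≤ 4 by norm_num) (m:ℤ) (by omega)] at h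
      exact h
    have ht := tails_vanish H hAS hR3 hR0
    have hR1 : ∀ j, 3 ≤ j → H j 0 = H (j+2) (-2) + H j (-2) * H 4 (-2) := by
      intro j hj
      have h := master_coeff H hz2 j hj (-2)
      rw [show (-2:ℤ)+2 = 0 from by norm_num, sigma3_coeff_nonneg H hj 0 le_rfl,
        sigma3_coeff_neg2 H (show 3 ≤ j+2 by omega),
        sigma3_coeff_neg2 H (show 3 ≤ 4 by norm_num)] at h
      exact h
    have hR2 : ∀ j, 3 ≤ j → H j 2 = H (j+2) 0 + H j (-2) * H 4 0 := by
      intro j hj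
      have h := master_coeff H hz2 j hj 0
      rw [show (0:ℤ)+2 = 2 from by norm_num, sigma3_coeff_nonneg H hj 2 (by norm_num),
        sigma3_coeff_nonneg H (show 3 ≤ j+2 by omega) 0 le_rfl,
        sigma3_coeff_nonneg H (show 3 ≤ 4 by norm_num) 0 le_rfl] at h
      exact h
    have hB : ∀ j, 3 ≤ j → H (j+2) 0 = -(H j (-2) * H 4 0) := by
      intro j hj
      have h := hR2 j hj
      have h2 := ht j 2 hj (by norm_num)
      norm_num at h2
      linear_combination h2 - h
    refine ⟨ht, ?_, ?_, ?_⟩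
    · intro j hj5
      have e : j - 2 + 2 = j := by omega
      have h1 := hR1 (j-2) (by omega)
      have h2 := hB (j-2) (by omega)
      rw [e] at h1 h2
      exact ⟨by linear_combination -h1, by linear_combination h2⟩
    all_goals {
      have hpoly : ∀ j, 3 ≤ j → sigma3 H j = zp j + H j (-2) • zp 2 + H j 0 • zp 0 := by
        intro j hj
        refine sigma3_eq_poly H j hj (fun k hk => ht j k hj hk)
      have hE : sigma3 H 3 * sigma3 H 3
          = zp 6 + (2*H 3 (-2)) • zp 5 + (H 3 (-2)^2) • zp 4 + (2*H 3 0) • zp 3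
            + (2*(H 3 (-2))*(H 3 0)) • zp 2 + ((H 3 0)^2) • zp 0 := by
        rw [hpoly 3 (by norm_num), poly_mul_expand]
        norm_num
        match_scalars <;> ring
      have hs : sigma3 H 3 * sigma3 H 3 ∈ Submodule.span ℂ (sigma3Set H) :=
        hmul 3 3 (by norm_num) (by norm_num)
      have hT3 : ∀ k ∈ ({3,4,5,6} : Finset ℕ), 3 ≤ k := by
        intro k hk
        fin_cases hk <;> norm_num
      have hT : ∀ k : ℕ, 3 ≤ k → (sigma3 H 3 * sigma3 H 3).coeff (-(k:ℤ)) ≠ 0 →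
          k ∈ ({3,4,5,6} : Finset ℕ) := by
        intro k hk3 hne
        by_contra hcon
        simp only [Finset.mem_insert, Finset.mem_singleton] at hcon
        push_neg at hcon
        obtain ⟨h3, h4, h5, h6⟩ := hcon
        apply hne
        rw [hE]
        simp only [HahnSeries.coeff_add, HahnSeries.coeff_smul, zp_coeff, smul_eq_mul]
        rw [if_neg (by omega), if_neg (by omega), if_neg (by omega), if_neg (by omega),
          if_neg (by omega), if_neg (by omega)]
        ring
      have hrep := span_coeff_repr hs _ hT3 hT
      rw [Finset.sum_insert (by norm_num), Finset.sum_insert (by norm_num),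
        Finset.sum_insert (by norm_num), Finset.sum_singleton] at hrep
      have hc3 : (sigma3 H 3 * sigma3 H 3).coeff (-((3:ℕ):ℤ)) = 2 * H 3 0 := by
        rw [hE]
        simp only [HahnSeries.coeff_add, HahnSeries.coeff_smul, zp_coeff, smul_eq_mul]
        norm_num
      have hc4 : (sigma3 H 3 * sigma3 H 3).coeff (-((4:ℕ):ℤ)) = H 3 (-2)^2 := by
        rw [hE]
        simp only [HahnSeries.coeff_add, HahnSeries.coeff_smul, zp_coeff, smul_eq_mul]
        norm_num
      have hc5 : (sigma3 H 3 * sigma3 H 3).coeff (-((5:ℕ):ℤ)) = 2 * H 3 (-2) := by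
        rw [hE]
        simp only [HahnSeries.coeff_add, HahnSeries.coeff_smul, zp_coeff, smul_eq_mul]
        norm_num
      have hc6 : (sigma3 H 3 * sigma3 H 3).coeff (-((6:ℕ):ℤ)) = 1 := by
        rw [hE]
        simp only [HahnSeries.coeff_add, HahnSeries.coeff_smul, zp_coeff, smul_eq_mul]
        norm_num
      rw [hc3, hc4, hc5, hc6, hE, one_smul] at hrep
      have h2 := congrArg (fun x : LaurentSeries ℂ => x.coeff (-2)) hrep
      have h0 := congrArg (fun x : LaurentSeries ℂ => x.coeff 0) hrep
      simp only [HahnSeries.coeff_add, HahnSeries.coeff_smul, zp_coeff, smul_eq_mul] at h2 h0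
      rw [sigma3_coeff_neg2 H (show 3 ≤ 3 by norm_num), sigma3_coeff_neg2 H (show 3 ≤ 4 by norm_num),
        sigma3_coeff_neg2 H (show 3 ≤ 5 by norm_num), sigma3_coeff_neg2 H (show 3 ≤ 6 by norm_num)]
        at h2
      rw [sigma3_coeff_nonneg H (show 3 ≤ 3 by norm_num) 0 le_rfl,
        sigma3_coeff_nonneg H (show 3 ≤ 4 by norm_num) 0 le_rfl,
        sigma3_coeff_nonneg H (show 3 ≤ 5 by norm_num) 0 le_rfl,
        sigma3_coeff_nonneg H (show 3 ≤ 6 by norm_num) 0 le_rfl] at h0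
      norm_num at h2 h0
      have R13 := hR1 3 (by norm_num)
      have R14 := hR1 4 (by norm_num)
      have hB3 := hB 3 (by norm_num)
      have hB4 := hB 4 (by norm_num)
      norm_num at R13 R14 hB3 hB4
      first
      | linear_combination (-1)*h2 + R14 + 2*H 3 (-2)*R13
      | linear_combination (-1)*h0 - 2*H 3 (-2)*hB3 - hB4
    }
  · rintro ⟨ht, hrec, hC1, hC2⟩
    have hrecA : ∀ m, 3 ≤ m → H (m+2) (-2) = H m 0 - H m (-2) * H 4 (-2) := by
      intro m hm
      have h := (hrec (m+2) (by omega)).1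
      rw [show m+2-2 = m from by omega] at h
      linear_combination h
    have hrecB : ∀ m, 3 ≤ m → H (m+2) 0 = -(H m (-2) * H 4 0) := by
      intro m hm
      have h := (hrec (m+2) (by omega)).2
      rw [show m+2-2 = m from by omega] at h
      linear_combination h
    have hFG := FG_zero H hrecA hrecB hC1 hC2
    have hpoly : ∀ j, 3 ≤ j → sigma3 H j = zp j + H j (-2) • zp 2 + H j 0 • zp 0 := by
      intro j hj
      exact sigma3_eq_poly H j hj (fun k hk => ht j k hj hk)
    have hm : ∀ k, 3 ≤ k → sigma3 H k ∈ Submodule.span ℂ (sigma3Set H) :=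
      fun k hk => Submodule.subset_span (sigma3_mem H hk)
    constructor
    · rintro x ⟨i, hi, rfl⟩ y ⟨j, hj, rfl⟩
      simp only [Set.mem_setOf_eq] at hi hj
      obtain ⟨hF, hG⟩ := hFG i j hi hj
      have key : sigma3 H i * sigma3 H j
          = sigma3 H (i+j) + H j (-2) • sigma3 H (i+2) + H j 0 • sigma3 H i
            + H i (-2) • sigma3 H (j+2) + H i 0 • sigma3 H j
            + (H i (-2) * H j (-2)) • sigma3 H 4 := by
        rw [hpoly i hi, hpoly j hj, hpoly (i+j) (by omega), hpoly (i+2) (by omega),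
          hpoly (j+2) (by omega), hpoly 4 (by norm_num), poly_mul_expand]
        push_cast
        set Au := H (i+j) (-2) with hAu
        set Bu := H (i+j) 0 with hBu
        set Av := H (i+2) (-2) with hAv
        set Bv := H (i+2) 0 with hBv
        set Aw := H (j+2) (-2) with hAw
        set Bw := H (j+2) 0 with hBw
        set Ac := H 4 (-2) with hAc
        set Bc := H 4 0 with hBc
        set Ai := H i (-2) with hAi
        set Bi := H i 0 with hBi
        set Aj := H j (-2) with hAj
        set Bj := H j 0 with hBj
        match_scalars <;>
          (first | ring1 | linear_combination hF | linear_combination -hF |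
            linear_combination hG | linear_combination -hG)
      rw [key]
      exact add_mem (add_mem (add_mem (add_mem (add_mem
        (hm (i+j) (by omega))
        (Submodule.smul_mem _ _ (hm (i+2) (by omega))))
        (Submodule.smul_mem _ _ (hm i hi)))
        (Submodule.smul_mem _ _ (hm (j+2) (by omega))))
        (Submodule.smul_mem _ _ (hm j hj)))
        (Submodule.smul_mem _ _ (hm 4 (by norm_num)))
    · rintro x ⟨j, hj, rfl⟩
      simp only [Set.mem_setOf_eq] at hj
      have hA := hrecA j hj
      have hBB := hrecB j hj
      have key : zp 2 * sigma3 H j = sigma3 H (j+2) + H j (-2) • sigma3 H 4 := by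
        rw [hpoly j hj, hpoly (j+2) (by omega), hpoly 4 (by norm_num)]
        simp only [mul_add, cmul_smul, zp_mul]
        push_cast
        rw [add_comm (2:ℤ) (j:ℤ)]
        norm_num
        set Aw := H (j+2) (-2) with hAw
        set Bw := H (j+2) 0 with hBw
        set Ac := H 4 (-2) with hAc
        set Bc := H 4 0 with hBc
        set Aj := H j (-2) with hAj
        set Bj := H j 0 with hBj
        match_scalars <;>
          (first | ring1 | linear_combination hA | linear_combination -hA |
            linear_combination hBB | linear_combination -hBB)
      rw [key]
      exact add_mem (hm (j+2) (by omega)) (Submodule.smul_mem _ _ (hm 4 (by norm_num)))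

end
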